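/- If np ≤ 1 − ε for some ε > 0, then the expected component size in G(n,p) satisfies E|C(v)| ≤ ε^{-1}. -/

import Mathlib

open scoped Classical BigOperators
noncomputable section

/-- Number of vertices in the connected component of `v` in `G`. -/
def compSize {V : Type*} (G : SimpleGraph V) (v : V) : ℕ :=
  Nat.card {w | G.Reachable v w}

/-- `∑_i |C_i|^k`, the sum of `k`-th powers of the component sizes of `G`. -/
def sumPow {V : Type*} [Fintype V] (G : SimpleGraph V) (k : ℕ) : ℝ :=
  ∑ c : G.ConnectedComponent, (Nat.card c.supp : ℝ) ^ k

/-- Expectation, under bond percolation with parameter `p` on the finite graph `G`,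
of a functional `f` of the resulting random subgraph. -/
def percExpect {V : Type*} [Fintype V] (G : SimpleGraph V) (p : ℝ)
    (f : SimpleGraph V → ℝ) : ℝ :=
  ∑ H ∈ Finset.univ.filter (fun H : SimpleGraph V => H ≤ G),
    p ^ (Nat.card H.edgeSet) * (1 - p) ^ (Nat.card G.edgeSet - Nat.card H.edgeSet) * f H

/-- `S_n(p) = E[∑_i |C_i|^2]` for the Erdős–Rényi random graph `G(n,p)`. -/
def S (n : ℕ) (p : ℝ) : ℝ := percExpect (⊤ : SimpleGraph (Fin n)) p (fun H => sumPow H 2)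

namespace SubcritAux

open Finset SimpleGraph

lemma binom_sum {α : Type*} (s : Finset α) (p q : ℝ) :
    ∑ t ∈ s.powerset, p ^ t.card * q ^ (s.card - t.card) = (p + q) ^ s.card := by
  calc ∑ t ∈ s.powerset, p ^ t.card * q ^ (s.card - t.card)
      = ∑ t ∈ s.powerset, (∏ _i ∈ t, p) * (∏ _i ∈ s \ t, q) := by
        refine Finset.sum_congr rfl fun t ht => ?_
        rw [Finset.prod_const, Finset.prod_const,
          Finset.card_sdiff_of_subset (Finset.mem_powerset.mp ht)]
    _ = ∏ i ∈ s, (p + q) := (Finset.prod_add _ _ _).symm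
    _ = (p + q) ^ s.card := Finset.prod_const _

variable {V : Type*} [Fintype V]

/-- The percolation weight of a subgraph. -/
def mu (p : ℝ) (H : SimpleGraph V) : ℝ :=
  p ^ (Nat.card H.edgeSet) *
    (1 - p) ^ (Nat.card (⊤ : SimpleGraph V).edgeSet - Nat.card H.edgeSet)

lemma mu_nonneg {p : ℝ} (hp0 : 0 ≤ p) (hp1 : p ≤ 1) (H : SimpleGraph V) :
    0 ≤ mu p H :=
  mul_nonneg (pow_nonneg hp0 _) (pow_nonneg (by linarith) _)

lemma natCard_edgeSet (H : SimpleGraph V) :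
    Nat.card H.edgeSet = H.edgeFinset.card := by
  rw [Nat.card_eq_card_toFinset]
  congr 1

lemma percExpect_top (p : ℝ) (f : SimpleGraph V → ℝ) :
    percExpect (⊤ : SimpleGraph V) p f = ∑ H : SimpleGraph V, mu p H * f H := by
  rw [percExpect]
  rw [Finset.filter_true_of_mem (fun _ _ => le_top)]
  refine Finset.sum_congr rfl fun H _ => ?_
  rw [mu]

lemma edgeFinset_fromEdgeSet (s : Finset (Sym2 V))
    (hs : s ⊆ (⊤ : SimpleGraph V).edgeFinset) :
    (SimpleGraph.fromEdgeSet (s : Set (Sym2 V))).edgeFinset = s := by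
  ext e
  simp only [SimpleGraph.mem_edgeFinset, SimpleGraph.edgeSet_fromEdgeSet, Set.mem_diff,
    Finset.mem_coe, Set.mem_setOf_eq]
  constructor
  · rintro ⟨he, _⟩; exact he
  · intro he
    exact ⟨he, SimpleGraph.not_isDiag_of_mem_edgeSet ⊤ (SimpleGraph.mem_edgeFinset.mp (hs he))⟩

/-- Probability that a fixed set of edges `T` is entirely present. -/
lemma sum_mu_ind (p : ℝ) (T : Finset (Sym2 V))
    (hT : T ⊆ (⊤ : SimpleGraph V).edgeFinset) :
    ∑ H : SimpleGraph V, mu p H * (if T ⊆ H.edgeFinset then (1:ℝ) else 0)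
      = p ^ T.card := by
  have h1 : ∑ H : SimpleGraph V, mu p H * (if T ⊆ H.edgeFinset then (1:ℝ) else 0)
      = ∑ s ∈ (⊤ : SimpleGraph V).edgeFinset.powerset,
          p ^ s.card * (1 - p) ^ ((⊤ : SimpleGraph V).edgeFinset.card - s.card)
            * (if T ⊆ s then (1:ℝ) else 0) := by
    refine Finset.sum_nbij' (fun H => H.edgeFinset)
      (fun s => SimpleGraph.fromEdgeSet (s : Set (Sym2 V))) ?_ ?_ ?_ ?_ ?_
    · intro H _
      exact Finset.mem_powerset.mpr (SimpleGraph.edgeFinset_mono le_top)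
    · intro s _; exact Finset.mem_univ _
    · intro H _
      show SimpleGraph.fromEdgeSet (H.edgeFinset : Set (Sym2 V)) = H
      rw [SimpleGraph.coe_edgeFinset, SimpleGraph.fromEdgeSet_edgeSet]
    · intro s hs
      convert edgeFinset_fromEdgeSet s (Finset.mem_powerset.mp hs) using 2
    · intro H _
      show _ = p ^ H.edgeFinset.card * (1 - p) ^ (_ - H.edgeFinset.card)
        * (if T ⊆ H.edgeFinset then (1:ℝ) else 0)
      rw [mu, natCard_edgeSet, natCard_edgeSet]
      congr!
  rw [h1]
  rw [← Finset.sum_filter_add_sum_filter_not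
    (⊤ : SimpleGraph V).edgeFinset.powerset (fun s => T ⊆ s)]
  have h2 : ∑ s ∈ (⊤ : SimpleGraph V).edgeFinset.powerset.filter (fun s => ¬ T ⊆ s),
      p ^ s.card * (1 - p) ^ ((⊤ : SimpleGraph V).edgeFinset.card - s.card)
        * (if T ⊆ s then (1:ℝ) else 0) = 0 := by
    refine Finset.sum_eq_zero fun s hs => ?_
    rw [if_neg (Finset.mem_filter.mp hs).2, mul_zero]
  rw [h2, add_zero]
  have h3 : ∑ s ∈ (⊤ : SimpleGraph V).edgeFinset.powerset.filter (fun s => T ⊆ s),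
      p ^ s.card * (1 - p) ^ ((⊤ : SimpleGraph V).edgeFinset.card - s.card)
        * (if T ⊆ s then (1:ℝ) else 0)
      = ∑ t ∈ ((⊤ : SimpleGraph V).edgeFinset \ T).powerset,
          p ^ T.card * (p ^ t.card
            * (1 - p) ^ (((⊤ : SimpleGraph V).edgeFinset \ T).card - t.card)) := by
    refine Finset.sum_nbij' (fun s => s \ T) (fun t => t ∪ T) ?_ ?_ ?_ ?_ ?_
    · intro s hs
      simp only [Finset.mem_filter, Finset.mem_powerset] at hs
      exact Finset.mem_powerset.mpr (Finset.sdiff_subset_sdiff hs.1 le_rfl)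
    · intro t ht
      simp only [Finset.mem_powerset] at ht
      refine Finset.mem_filter.mpr ⟨Finset.mem_powerset.mpr ?_, Finset.subset_union_right⟩
      exact Finset.union_subset (ht.trans (Finset.sdiff_subset)) hT
    · intro s hs
      simp only [Finset.mem_filter, Finset.mem_powerset] at hs
      exact Finset.sdiff_union_of_subset hs.2
    · intro t ht
      simp only [Finset.mem_powerset] at ht
      refine Finset.union_sdiff_cancel_right ?_
      exact Finset.disjoint_left.mpr fun a hat haT => (Finset.mem_sdiff.mp (ht hat)).2 haT
    · intro s hs
      simp only [Finset.mem_filter, Finset.mem_powerset] at hs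
      rw [if_pos hs.2, mul_one]
      have hcard : s.card = T.card + (s \ T).card := by
        rw [add_comm, Finset.card_sdiff_add_card_eq_card hs.2]
      have hTE : T.card ≤ (⊤ : SimpleGraph V).edgeFinset.card := Finset.card_le_card hT
      have hsE : s.card ≤ (⊤ : SimpleGraph V).edgeFinset.card := Finset.card_le_card hs.1
      have hETcard : ((⊤ : SimpleGraph V).edgeFinset \ T).card
          = (⊤ : SimpleGraph V).edgeFinset.card - T.card := Finset.card_sdiff_of_subset hT
      have hTs : T.card ≤ s.card := Finset.card_le_card hs.2
      rw [hcard, pow_add]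
      have heq : (⊤ : SimpleGraph V).edgeFinset.card - (T.card + (s \ T).card)
          = ((⊤ : SimpleGraph V).edgeFinset \ T).card - (s \ T).card := by omega
      rw [heq]
      ring
  rw [h3, ← Finset.mul_sum, binom_sum]
  norm_num

lemma compSize_eq_sum (H : SimpleGraph V) (v : V) :
    (compSize H v : ℝ) = ∑ w : V, (if H.Reachable v w then (1:ℝ) else 0) := by
  rw [Finset.sum_boole, compSize, Nat.card_eq_card_toFinset]
  have : {w | H.Reachable v w}.toFinset = Finset.univ.filter (fun w => H.Reachable v w) := by
    ext w; simp
  rw [this]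

lemma count_walks :
    ∀ (k : ℕ) (u : V),
      ∑ w : V, ((⊤ : SimpleGraph V).finsetWalkLength k u w).card ≤ (Fintype.card V) ^ k := by
  intro k
  induction k with
  | zero =>
    intro u
    have h : ∀ w : V, ((⊤ : SimpleGraph V).finsetWalkLength 0 u w).card = if u = w then 1 else 0 := by
      intro w
      split_ifs with h
      · subst h
        rw [Finset.card_eq_one]
        refine ⟨SimpleGraph.Walk.nil, ?_⟩
        ext q
        rw [SimpleGraph.mem_finsetWalkLength_iff, Finset.mem_singleton,
          SimpleGraph.Walk.length_eq_zero_iff, SimpleGraph.Walk.nil_iff_eq_nil]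
      · rw [Finset.card_eq_zero]
        rw [Finset.eq_empty_iff_forall_notMem]
        intro q hq
        exact h (SimpleGraph.Walk.eq_of_length_eq_zero
          (SimpleGraph.mem_finsetWalkLength_iff.mp hq))
    simp [h]
  | succ k ih =>
    intro u
    calc ∑ w : V, ((⊤ : SimpleGraph V).finsetWalkLength (k+1) u w).card
        ≤ ∑ w : V, ∑ u' : (⊤ : SimpleGraph V).neighborSet u, (((⊤ : SimpleGraph V).finsetWalkLength k u' w).map
            ⟨fun p => SimpleGraph.Walk.cons u'.property p, fun _ _ => by intro hab; cases hab; rfl⟩).card := by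
          refine Finset.sum_le_sum fun w _ => ?_
          exact Finset.card_biUnion_le
      _ = ∑ u' : (⊤ : SimpleGraph V).neighborSet u, ∑ w : V, ((⊤ : SimpleGraph V).finsetWalkLength k u' w).card := by
          rw [Finset.sum_comm]
          simp [Finset.card_map]
      _ ≤ ∑ u' : (⊤ : SimpleGraph V).neighborSet u, (Fintype.card V) ^ k := Finset.sum_le_sum fun u' _ => ih u'
      _ = Fintype.card ((⊤ : SimpleGraph V).neighborSet u) * (Fintype.card V) ^ k := by
          rw [Finset.sum_const, smul_eq_mul, Finset.card_univ]
      _ ≤ (Fintype.card V) * (Fintype.card V) ^ k := by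
          have := Fintype.card_le_of_embedding (Function.Embedding.subtype
            (fun w => w ∈ (⊤ : SimpleGraph V).neighborSet u))
          exact Nat.mul_le_mul_right _ this
      _ = (Fintype.card V) ^ (k + 1) := by ring

lemma ind_reach_le (H : SimpleGraph V) (v w : V) :
    (if H.Reachable v w then (1:ℝ) else 0) ≤
      ∑ q ∈ ((⊤ : SimpleGraph V).finsetWalkLengthLT (Fintype.card V) v w).filter
          SimpleGraph.Walk.IsPath,
        (if q.edges.toFinset ⊆ H.edgeFinset then (1:ℝ) else 0) := by
  have hnonneg : ∀ q ∈ ((⊤ : SimpleGraph V).finsetWalkLengthLT (Fintype.card V) v w).filter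
      SimpleGraph.Walk.IsPath, (0:ℝ) ≤ (if q.edges.toFinset ⊆ H.edgeFinset then (1:ℝ) else 0) :=
    fun q _ => by split_ifs <;> norm_num
  split_ifs with h
  · obtain ⟨pw⟩ := h
    set P := pw.toPath with hP
    have hedges : ∀ e ∈ P.val.edges, e ∈ (⊤ : SimpleGraph V).edgeSet :=
      fun e he => SimpleGraph.edgeSet_mono le_top (P.val.edges_subset_edgeSet he)
    set q := P.val.transfer ⊤ hedges with hq
    have hqpath : q.IsPath := P.prop.transfer hedges
    have hqlen : q.length < Fintype.card V := by
      rw [SimpleGraph.Walk.length_transfer]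
      exact P.prop.length_lt
    have hqmem : q ∈ ((⊤ : SimpleGraph V).finsetWalkLengthLT (Fintype.card V) v w).filter
        SimpleGraph.Walk.IsPath := by
      rw [Finset.mem_filter]
      exact ⟨SimpleGraph.mem_finsetWalkLengthLT_iff.mpr hqlen, hqpath⟩
    have hqok : (if q.edges.toFinset ⊆ H.edgeFinset then (1:ℝ) else 0) = 1 := by
      rw [if_pos]
      intro e he
      rw [List.mem_toFinset, SimpleGraph.Walk.edges_transfer] at he
      exact SimpleGraph.mem_edgeFinset.mpr (P.val.edges_subset_edgeSet he)
    calc (1:ℝ) = _ := hqok.symm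
      _ ≤ _ := Finset.single_le_sum hnonneg hqmem
  · exact Finset.sum_nonneg hnonneg

set_option maxHeartbeats 4000000 in
theorem main {p : ℝ} (hp0 : 0 ≤ p) (hp1 : p ≤ 1)
    {ε : ℝ} (hε : 0 < ε) (h : (Fintype.card V : ℝ) * p ≤ 1 - ε) (v : V) :
    percExpect (⊤ : SimpleGraph V) p (fun H => (compSize H v : ℝ)) ≤ ε⁻¹ := by
  set N := Fintype.card V with hN
  have hε1 : (0:ℝ) ≤ 1 - ε := le_trans (mul_nonneg (Nat.cast_nonneg N) hp0) h
  rw [percExpect_top]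
  have step1 : ∑ H : SimpleGraph V, mu p H * (compSize H v : ℝ)
      = ∑ w : V, ∑ H : SimpleGraph V,
          mu p H * (if H.Reachable v w then (1:ℝ) else 0) := by
    rw [Finset.sum_comm]
    refine Finset.sum_congr rfl fun H _ => ?_
    rw [compSize_eq_sum, Finset.mul_sum]
  rw [step1]
  have step2 : ∀ w : V,
      ∑ H : SimpleGraph V, mu p H * (if H.Reachable v w then (1:ℝ) else 0)
      ≤ ∑ q ∈ ((⊤ : SimpleGraph V).finsetWalkLengthLT N v w).filter
          SimpleGraph.Walk.IsPath, p ^ q.length := by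
    intro w
    calc ∑ H : SimpleGraph V, mu p H * (if H.Reachable v w then (1:ℝ) else 0)
        ≤ ∑ H : SimpleGraph V, mu p H *
            (∑ q ∈ ((⊤ : SimpleGraph V).finsetWalkLengthLT N v w).filter
              SimpleGraph.Walk.IsPath,
              (if q.edges.toFinset ⊆ H.edgeFinset then (1:ℝ) else 0)) := by
          refine Finset.sum_le_sum fun H _ => ?_
          exact mul_le_mul_of_nonneg_left (ind_reach_le H v w) (mu_nonneg hp0 hp1 H)
      _ = ∑ q ∈ ((⊤ : SimpleGraph V).finsetWalkLengthLT N v w).filter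
            SimpleGraph.Walk.IsPath,
            ∑ H : SimpleGraph V, mu p H *
              (if q.edges.toFinset ⊆ H.edgeFinset then (1:ℝ) else 0) := by
          simp_rw [Finset.mul_sum]
          rw [Finset.sum_comm]
      _ = ∑ q ∈ ((⊤ : SimpleGraph V).finsetWalkLengthLT N v w).filter
            SimpleGraph.Walk.IsPath, p ^ q.length := by
          refine Finset.sum_congr rfl fun q hq => ?_
          have hqpath : q.IsPath := (Finset.mem_filter.mp hq).2
          have hT : q.edges.toFinset ⊆ (⊤ : SimpleGraph V).edgeFinset := by
            intro e he
            rw [List.mem_toFinset] at he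
            exact SimpleGraph.mem_edgeFinset.mpr (q.edges_subset_edgeSet he)
          rw [sum_mu_ind p _ hT]
          congr 1
          rw [List.toFinset_card_of_nodup hqpath.isTrail.edges_nodup,
            SimpleGraph.Walk.length_edges]
  have step3 : ∀ w : V,
      ∑ q ∈ ((⊤ : SimpleGraph V).finsetWalkLengthLT N v w).filter
        SimpleGraph.Walk.IsPath, p ^ q.length
      ≤ ∑ k ∈ Finset.range N,
          (((⊤ : SimpleGraph V).finsetWalkLength k v w).card : ℝ) * p ^ k := by
    intro w
    calc ∑ q ∈ ((⊤ : SimpleGraph V).finsetWalkLengthLT N v w).filter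
          SimpleGraph.Walk.IsPath, p ^ q.length
        ≤ ∑ q ∈ (⊤ : SimpleGraph V).finsetWalkLengthLT N v w, p ^ q.length := by
          refine Finset.sum_le_sum_of_subset_of_nonneg (Finset.filter_subset _ _) ?_
          intro q _ _
          exact pow_nonneg hp0 _
      _ = ∑ k ∈ Finset.range N, ∑ q ∈ (⊤ : SimpleGraph V).finsetWalkLength k v w,
            p ^ q.length := by
          exact Finset.sum_disjiUnion _ _ _
      _ = ∑ k ∈ Finset.range N,
            (((⊤ : SimpleGraph V).finsetWalkLength k v w).card : ℝ) * p ^ k := by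
          refine Finset.sum_congr rfl fun k _ => ?_
          have hcongr : ∑ q ∈ (⊤ : SimpleGraph V).finsetWalkLength k v w, p ^ q.length
              = ∑ _q ∈ (⊤ : SimpleGraph V).finsetWalkLength k v w, p ^ k :=
            Finset.sum_congr rfl fun q hq => by
              rw [SimpleGraph.mem_finsetWalkLength_iff.mp hq]
          rw [hcongr, Finset.sum_const, nsmul_eq_mul]
  calc ∑ w : V, ∑ H : SimpleGraph V,
        mu p H * (if H.Reachable v w then (1:ℝ) else 0)
      ≤ ∑ w : V, ∑ k ∈ Finset.range N,
          (((⊤ : SimpleGraph V).finsetWalkLength k v w).card : ℝ) * p ^ k :=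
        Finset.sum_le_sum fun w _ => (step2 w).trans (step3 w)
    _ = ∑ k ∈ Finset.range N,
          ((∑ w : V, ((⊤ : SimpleGraph V).finsetWalkLength k v w).card : ℕ) : ℝ)
            * p ^ k := by
        rw [Finset.sum_comm]
        refine Finset.sum_congr rfl fun k _ => ?_
        rw [Nat.cast_sum, Finset.sum_mul]
    _ ≤ ∑ k ∈ Finset.range N, ((N : ℝ) ^ k) * p ^ k := by
        refine Finset.sum_le_sum fun k _ => ?_
        refine mul_le_mul_of_nonneg_right ?_ (pow_nonneg hp0 _)
        calc ((∑ w : V, ((⊤ : SimpleGraph V).finsetWalkLength k v w).card : ℕ) : ℝ)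
            ≤ ((N ^ k : ℕ) : ℝ) := Nat.cast_le.mpr (count_walks k v)
          _ = (N : ℝ) ^ k := by push_cast; ring
    _ = ∑ k ∈ Finset.range N, ((N : ℝ) * p) ^ k := by
        refine Finset.sum_congr rfl fun k _ => ?_
        rw [mul_pow]
    _ ≤ ∑ k ∈ Finset.range N, (1 - ε) ^ k := by
        refine Finset.sum_le_sum fun k _ => ?_
        exact pow_le_pow_left₀ (mul_nonneg (Nat.cast_nonneg N) hp0) h k
    _ ≤ ε⁻¹ := by
        have hgs := geom_sum_mul (1 - ε) N
        have hpow : (0:ℝ) ≤ (1 - ε) ^ N := pow_nonneg hε1 N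
        rw [inv_eq_one_div, le_div_iff₀ hε]
        nlinarith

end SubcritAux

/-- Subcritical susceptibility bound for `G(n,p)`: if `np ≤ 1 − ε` with `ε > 0`, then
`E|C(v)| ≤ ε⁻¹`. -/
theorem subcritical_susceptibility (n : ℕ) (p : ℝ) (hp0 : 0 ≤ p) (hp1 : p ≤ 1)
    (ε : ℝ) (hε : 0 < ε) (h : (n : ℝ) * p ≤ 1 - ε) (v : Fin n) :
    percExpect (⊤ : SimpleGraph (Fin n)) p (fun H => (compSize H v : ℝ)) ≤ ε⁻¹ := by
  exact SubcritAux.main hp0 hp1 hε (by rwa [Fintype.card_fin]) v
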